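/- For an elasticity tensor E with harmonic decomposition E = (λ, μ, d', v', H), the squared Euclidean norm decomposes as ‖E‖² = 3(3λ² + 4λμ + 8μ²) + (2/21)‖d' + 2v'‖² + (4/3)‖d' − v'‖² + ‖H‖². -/
import Mathlib


/-- Kronecker delta on `Fin 3`. -/
def kd (i j : Fin 3) : ℝ := if i = j then 1 else 0

set_option maxHeartbeats 4000000 in
/-- For an elasticity tensor `E` with harmonic decomposition
`E = (λ, μ, d', v', H)`, the squared Euclidean norm decomposes as
`‖E‖² = 3(3λ² + 4λμ + 8μ²) + (2/21)‖d' + 2v'‖² + (4/3)‖d' − v'‖² + ‖H‖²`. -/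
theorem norm_sq_harmonic_decomposition
    (E : Fin 3 → Fin 3 → Fin 3 → Fin 3 → ℝ)
    (hminor : ∀ i j k l, E i j k l = E j i k l ∧ E i j k l = E i j l k)
    (hmajor : ∀ i j k l, E i j k l = E k l i j)
    (d v : Fin 3 → Fin 3 → ℝ)
    (hd : ∀ k l, d k l = ∑ i : Fin 3, E i i k l)
    (hv : ∀ j l, v j l = ∑ i : Fin 3, E i j i l)
    (lam mu : ℝ)
    (hlam : lam = (2 * (∑ i : Fin 3, d i i) - (∑ i : Fin 3, v i i)) / 15)
    (hmu : mu = (3 * (∑ i : Fin 3, v i i) - (∑ i : Fin 3, d i i)) / 30)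
    (dp vp : Fin 3 → Fin 3 → ℝ)
    (hdp : ∀ i j, dp i j = d i j - (∑ k : Fin 3, d k k) / 3 * kd i j)
    (hvp : ∀ i j, vp i j = v i j - (∑ k : Fin 3, v k k) / 3 * kd i j)
    (Es H : Fin 3 → Fin 3 → Fin 3 → Fin 3 → ℝ)
    (hEs : ∀ i j k l, Es i j k l = (E i j k l + E i k j l + E i l j k) / 3)
    (hH : ∀ i j k l, H i j k l =
      Es i j k l
      - (2 * mu + lam) * ((kd i j * kd k l + kd i k * kd j l + kd i l * kd j k) / 3)
      - (2 / 7) * ((kd i j * (dp k l + 2 * vp k l) + kd i k * (dp j l + 2 * vp j l)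
          + kd i l * (dp j k + 2 * vp j k) + kd k l * (dp i j + 2 * vp i j)
          + kd j l * (dp i k + 2 * vp i k) + kd j k * (dp i l + 2 * vp i l)) / 6)) :
    (∑ i : Fin 3, ∑ j : Fin 3, ∑ k : Fin 3, ∑ l : Fin 3, E i j k l * E i j k l)
      = 3 * (3 * lam ^ 2 + 4 * lam * mu + 8 * mu ^ 2)
        + (2 / 21) * (∑ i : Fin 3, ∑ j : Fin 3, (dp i j + 2 * vp i j) ^ 2)
        + (4 / 3) * (∑ i : Fin 3, ∑ j : Fin 3, (dp i j - vp i j) ^ 2)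
        + (∑ i : Fin 3, ∑ j : Fin 3, ∑ k : Fin 3, ∑ l : Fin 3,
            H i j k l * H i j k l) := by
  have hc0 : E 0 0 1 0 = E 0 0 0 1 := by rw [(hminor 0 0 1 0).2]
  have hc1 : E 0 0 2 0 = E 0 0 0 2 := by rw [(hminor 0 0 2 0).2]
  have hc2 : E 0 0 2 1 = E 0 0 1 2 := by rw [(hminor 0 0 2 1).2]
  have hc3 : E 0 1 0 0 = E 0 0 0 1 := by rw [hmajor 0 1 0 0]
  have hc4 : E 0 1 1 0 = E 0 1 0 1 := by rw [(hminor 0 1 1 0).2]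
  have hc5 : E 0 1 2 0 = E 0 1 0 2 := by rw [(hminor 0 1 2 0).2]
  have hc6 : E 0 1 2 1 = E 0 1 1 2 := by rw [(hminor 0 1 2 1).2]
  have hc7 : E 0 2 0 0 = E 0 0 0 2 := by rw [hmajor 0 2 0 0]
  have hc8 : E 0 2 0 1 = E 0 1 0 2 := by rw [hmajor 0 2 0 1]
  have hc9 : E 0 2 1 0 = E 0 1 0 2 := by rw [(hminor 0 2 1 0).2, hmajor 0 2 0 1]
  have hc10 : E 0 2 2 0 = E 0 2 0 2 := by rw [(hminor 0 2 2 0).2]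
  have hc11 : E 0 2 2 1 = E 0 2 1 2 := by rw [(hminor 0 2 2 1).2]
  have hc12 : E 1 0 0 0 = E 0 0 0 1 := by rw [(hminor 1 0 0 0).1, hmajor 0 1 0 0]
  have hc13 : E 1 0 0 1 = E 0 1 0 1 := by rw [(hminor 1 0 0 1).1]
  have hc14 : E 1 0 0 2 = E 0 1 0 2 := by rw [(hminor 1 0 0 2).1]
  have hc15 : E 1 0 1 0 = E 0 1 0 1 := by rw [(hminor 1 0 1 0).1, (hminor 0 1 1 0).2]
  have hc16 : E 1 0 1 1 = E 0 1 1 1 := by rw [(hminor 1 0 1 1).1]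
  have hc17 : E 1 0 1 2 = E 0 1 1 2 := by rw [(hminor 1 0 1 2).1]
  have hc18 : E 1 0 2 0 = E 0 1 0 2 := by rw [(hminor 1 0 2 0).1, (hminor 0 1 2 0).2]
  have hc19 : E 1 0 2 1 = E 0 1 1 2 := by rw [(hminor 1 0 2 1).1, (hminor 0 1 2 1).2]
  have hc20 : E 1 0 2 2 = E 0 1 2 2 := by rw [(hminor 1 0 2 2).1]
  have hc21 : E 1 1 0 0 = E 0 0 1 1 := by rw [hmajor 1 1 0 0]
  have hc22 : E 1 1 0 1 = E 0 1 1 1 := by rw [hmajor 1 1 0 1]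
  have hc23 : E 1 1 0 2 = E 0 2 1 1 := by rw [hmajor 1 1 0 2]
  have hc24 : E 1 1 1 0 = E 0 1 1 1 := by rw [(hminor 1 1 1 0).2, hmajor 1 1 0 1]
  have hc25 : E 1 1 2 0 = E 0 2 1 1 := by rw [(hminor 1 1 2 0).2, hmajor 1 1 0 2]
  have hc26 : E 1 1 2 1 = E 1 1 1 2 := by rw [(hminor 1 1 2 1).2]
  have hc27 : E 1 2 0 0 = E 0 0 1 2 := by rw [hmajor 1 2 0 0]
  have hc28 : E 1 2 0 1 = E 0 1 1 2 := by rw [hmajor 1 2 0 1]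
  have hc29 : E 1 2 0 2 = E 0 2 1 2 := by rw [hmajor 1 2 0 2]
  have hc30 : E 1 2 1 0 = E 0 1 1 2 := by rw [(hminor 1 2 1 0).2, hmajor 1 2 0 1]
  have hc31 : E 1 2 1 1 = E 1 1 1 2 := by rw [hmajor 1 2 1 1]
  have hc32 : E 1 2 2 0 = E 0 2 1 2 := by rw [(hminor 1 2 2 0).2, hmajor 1 2 0 2]
  have hc33 : E 1 2 2 1 = E 1 2 1 2 := by rw [(hminor 1 2 2 1).2]
  have hc34 : E 2 0 0 0 = E 0 0 0 2 := by rw [(hminor 2 0 0 0).1, hmajor 0 2 0 0]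
  have hc35 : E 2 0 0 1 = E 0 1 0 2 := by rw [(hminor 2 0 0 1).1, hmajor 0 2 0 1]
  have hc36 : E 2 0 0 2 = E 0 2 0 2 := by rw [(hminor 2 0 0 2).1]
  have hc37 : E 2 0 1 0 = E 0 1 0 2 := by rw [(hminor 2 0 1 0).1, (hminor 0 2 1 0).2, hmajor 0 2 0 1]
  have hc38 : E 2 0 1 1 = E 0 2 1 1 := by rw [(hminor 2 0 1 1).1]
  have hc39 : E 2 0 1 2 = E 0 2 1 2 := by rw [(hminor 2 0 1 2).1]
  have hc40 : E 2 0 2 0 = E 0 2 0 2 := by rw [(hminor 2 0 2 0).1, (hminor 0 2 2 0).2]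
  have hc41 : E 2 0 2 1 = E 0 2 1 2 := by rw [(hminor 2 0 2 1).1, (hminor 0 2 2 1).2]
  have hc42 : E 2 0 2 2 = E 0 2 2 2 := by rw [(hminor 2 0 2 2).1]
  have hc43 : E 2 1 0 0 = E 0 0 1 2 := by rw [(hminor 2 1 0 0).1, hmajor 1 2 0 0]
  have hc44 : E 2 1 0 1 = E 0 1 1 2 := by rw [(hminor 2 1 0 1).1, hmajor 1 2 0 1]
  have hc45 : E 2 1 0 2 = E 0 2 1 2 := by rw [(hminor 2 1 0 2).1, hmajor 1 2 0 2]
  have hc46 : E 2 1 1 0 = E 0 1 1 2 := by rw [(hminor 2 1 1 0).1, (hminor 1 2 1 0).2, hmajor 1 2 0 1]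
  have hc47 : E 2 1 1 1 = E 1 1 1 2 := by rw [(hminor 2 1 1 1).1, hmajor 1 2 1 1]
  have hc48 : E 2 1 1 2 = E 1 2 1 2 := by rw [(hminor 2 1 1 2).1]
  have hc49 : E 2 1 2 0 = E 0 2 1 2 := by rw [(hminor 2 1 2 0).1, (hminor 1 2 2 0).2, hmajor 1 2 0 2]
  have hc50 : E 2 1 2 1 = E 1 2 1 2 := by rw [(hminor 2 1 2 1).1, (hminor 1 2 2 1).2]
  have hc51 : E 2 1 2 2 = E 1 2 2 2 := by rw [(hminor 2 1 2 2).1]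
  have hc52 : E 2 2 0 0 = E 0 0 2 2 := by rw [hmajor 2 2 0 0]
  have hc53 : E 2 2 0 1 = E 0 1 2 2 := by rw [hmajor 2 2 0 1]
  have hc54 : E 2 2 0 2 = E 0 2 2 2 := by rw [hmajor 2 2 0 2]
  have hc55 : E 2 2 1 0 = E 0 1 2 2 := by rw [(hminor 2 2 1 0).2, hmajor 2 2 0 1]
  have hc56 : E 2 2 1 1 = E 1 1 2 2 := by rw [hmajor 2 2 1 1]
  have hc57 : E 2 2 1 2 = E 1 2 2 2 := by rw [hmajor 2 2 1 2]
  have hc58 : E 2 2 2 0 = E 0 2 2 2 := by rw [(hminor 2 2 2 0).2, hmajor 2 2 0 2]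
  have hc59 : E 2 2 2 1 = E 1 2 2 2 := by rw [(hminor 2 2 2 1).2, hmajor 2 2 1 2]
  simp only [hH, hEs, hdp, hvp, hd, hv, hlam, hmu, kd, Fin.sum_univ_three]
  norm_num [Fin.ext_iff]
  simp only [hc0, hc1, hc2, hc3, hc4, hc5, hc6, hc7, hc8, hc9, hc10, hc11, hc12, hc13, hc14, hc15, hc16, hc17, hc18, hc19, hc20, hc21, hc22, hc23, hc24, hc25, hc26, hc27, hc28, hc29, hc30, hc31, hc32, hc33, hc34, hc35, hc36, hc37, hc38, hc39, hc40, hc41, hc42, hc43, hc44, hc45, hc46, hc47, hc48, hc49, hc50, hc51, hc52, hc53, hc54, hc55, hc56, hc57, hc58, hc59]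
  ring
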